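/- arXiv:2205.14213 — 9 statements merged into one kernel-verified Lean document; each statement's English description precedes it below -/
import Mathlib

section
/- If a deterministic object type T is n-recording (for n ≥ 2), then T is n-discerning. Concretely: if there exist a state q0, a partition of process indices {1,...,n} into two nonempty teams A and B, and operations op_1,...,op_n such that Q_A ∩ Q_B = ∅ (plus the two initial-state conditions), then the same q0, partition, and operations witness that T is n-discerning, i.e., R_{A,j} ∩ R_{B,j} = ∅ for every j. -/
/-- A deterministic shared object type: states, operations, responses, and a
deterministic transition function giving new state and response. -/
structure DetType where
  State : Type
  Op : Type
  Resp : Type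
  tr : Op → State → State × Resp

namespace DetType

/-- Apply a sequence of operations to a state. -/
def applySeq (T : DetType) (l : List T.Op) (q : T.State) : T.State :=
  l.foldl (fun s o => (T.tr o s).1) q

/-- `Q_X(q0, op)`: states reachable from `q0` by applying `op_{i_1},...,op_{i_α}`
for a sequence of distinct indices whose first index is in `X`. -/
def QSet (T : DetType) {n : ℕ} (q0 : T.State) (op : Fin n → T.Op)
    (X : Finset (Fin n)) : Set T.State :=
  { q | ∃ l : List (Fin n), l.Nodup ∧ (∃ i ∈ X, l.head? = some i) ∧
      T.applySeq (l.map op) q0 = q }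

/-- `R_{X,j}`: pairs (response of `op_j`, final state) arising from sequences of
distinct indices containing `j` whose first index is in `X`, applied from `q0`. -/
def RSet (T : DetType) {n : ℕ} (q0 : T.State) (op : Fin n → T.Op)
    (X : Finset (Fin n)) (j : Fin n) : Set (T.Resp × T.State) :=
  { p | ∃ l1 l2 : List (Fin n), (l1 ++ j :: l2).Nodup ∧
      (∃ i ∈ X, (l1 ++ j :: l2).head? = some i) ∧
      p.1 = (T.tr (op j) (T.applySeq (l1.map op) q0)).2 ∧
      p.2 = T.applySeq ((l1 ++ j :: l2).map op) q0 }

/-- `T` is `n`-discerning. -/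
def isDiscerning (T : DetType) (n : ℕ) : Prop :=
  ∃ (q0 : T.State) (A B : Finset (Fin n)) (op : Fin n → T.Op),
    A.Nonempty ∧ B.Nonempty ∧ Disjoint A B ∧ A ∪ B = Finset.univ ∧
    ∀ j, T.RSet q0 op A j ∩ T.RSet q0 op B j = ∅

/-- `T` is `n`-recording. -/
def isRecording (T : DetType) (n : ℕ) : Prop :=
  ∃ (q0 : T.State) (A B : Finset (Fin n)) (op : Fin n → T.Op),
    A.Nonempty ∧ B.Nonempty ∧ Disjoint A B ∧ A ∪ B = Finset.univ ∧
    T.QSet q0 op A ∩ T.QSet q0 op B = ∅ ∧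
    (q0 ∉ T.QSet q0 op A ∨ B.card = 1) ∧
    (q0 ∉ T.QSet q0 op B ∨ A.card = 1)

end DetType

open DetType

/-- If a deterministic type is n-recording (n ≥ 2), the same witness shows it is
n-discerning: `R_{A,j} ∩ R_{B,j} = ∅` for every `j`. -/
theorem stmt0 (T : DetType) (n : ℕ) (hn : 2 ≤ n) (q0 : T.State)
    (A B : Finset (Fin n)) (op : Fin n → T.Op)
    (hA : A.Nonempty) (hB : B.Nonempty) (hAB : Disjoint A B) (hU : A ∪ B = Finset.univ)
    (h1 : T.QSet q0 op A ∩ T.QSet q0 op B = ∅)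
    (h2 : q0 ∉ T.QSet q0 op A ∨ B.card = 1)
    (h3 : q0 ∉ T.QSet q0 op B ∨ A.card = 1) :
    ∀ j, T.RSet q0 op A j ∩ T.RSet q0 op B j = ∅ := by
  intro j
  ext p
  simp only [Set.mem_inter_iff, Set.mem_empty_iff_false, iff_false]
  rintro ⟨⟨l1, l2, hnd, hhd, _, hq⟩, ⟨l1', l2', hnd', hhd', _, hq'⟩⟩
  have hqa : p.2 ∈ T.QSet q0 op A := ⟨l1 ++ j :: l2, hnd, hhd, hq.symm⟩
  have hqb : p.2 ∈ T.QSet q0 op B := ⟨l1' ++ j :: l2', hnd', hhd', hq'.symm⟩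
  have : p.2 ∈ T.QSet q0 op A ∩ T.QSet q0 op B := ⟨hqa, hqb⟩
  rw [h1] at this
  exact this
end

section
/- If a deterministic object type T is n-recording for some n ≥ 3, then T is (n-1)-recording. Specifically, given a witness (q0, A, B, op_1,...,op_n) for n-recording, removing one process from the larger team (and keeping the same initial state and assigned operations for the remaining n-1 processes) yields a witness for (n-1)-recording. -/
open DetType

/-- Reindexing along an injection shrinks the reachable-state sets. -/
lemma qset_mono (T : DetType) {m n : ℕ} (q0 : T.State) (op : Fin n → T.Op)
    (e : Fin m → Fin n) (he : Function.Injective e)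
    (X' : Finset (Fin m)) (X : Finset (Fin n)) (hX : ∀ i ∈ X', e i ∈ X) :
    T.QSet q0 (op ∘ e) X' ⊆ T.QSet q0 op X := by
  rintro q ⟨l, hnd, ⟨i, hiX, hhd⟩, happ⟩
  refine ⟨l.map e, hnd.map he, ⟨e i, hX i hiX, ?_⟩, ?_⟩
  · rw [List.head?_map, hhd]; rfl
  · rw [List.map_map]; exact happ

/-- Removing one process from team `A` (assumed of size at least 2). -/
lemma rec_aux (T : DetType) (n : ℕ) (hn : 3 ≤ n)
    (q0 : T.State) (A B : Finset (Fin n)) (op : Fin n → T.Op)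
    (hB : B.Nonempty) (hd : Disjoint A B) (hu : A ∪ B = Finset.univ)
    (hint : T.QSet q0 op A ∩ T.QSet q0 op B = ∅)
    (h2 : q0 ∉ T.QSet q0 op A ∨ B.card = 1)
    (h3 : q0 ∉ T.QSet q0 op B ∨ A.card = 1)
    (hA2 : 2 ≤ A.card) : isRecording T (n - 1) := by
  obtain ⟨a0, ha0⟩ : A.Nonempty := Finset.card_pos.mp (by omega)
  have hm : n - 1 + 1 = n := by omega
  set e : Fin (n - 1) → Fin n :=
    fun i => Fin.cast hm ((Fin.cast hm.symm a0).succAbove i) with he_def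
  have he : Function.Injective e := by
    intro i j hij
    exact (Fin.succAbove_right_injective (p := Fin.cast hm.symm a0))
      ((Fin.cast_injective hm) hij)
  have hrange : ∀ b : Fin n, b ≠ a0 → ∃ i, e i = b := by
    intro b hb
    obtain ⟨i, hi⟩ := Fin.exists_succAbove_eq
      (show Fin.cast hm.symm b ≠ Fin.cast hm.symm a0 by
        simpa [Fin.ext_iff] using (show (b : ℕ) ≠ (a0 : ℕ) by
          simpa [Fin.ext_iff] using hb))
    refine ⟨i, ?_⟩
    simp only [he_def, hi]
    simp [Fin.ext_iff]
  have hea0 : ∀ i, e i ≠ a0 := by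
    intro i h
    have := Fin.succAbove_ne (Fin.cast hm.symm a0) i
    apply this
    simpa [he_def, Fin.ext_iff] using h
  set A' : Finset (Fin (n - 1)) := Finset.univ.filter (fun i => e i ∈ A) with hA'
  set B' : Finset (Fin (n - 1)) := Finset.univ.filter (fun i => e i ∈ B) with hB'
  have hBcard : B'.card = B.card := by
    apply Finset.card_bij (fun i _ => e i)
    · intro i hi; simpa [hB'] using hi
    · intro i hi j hj hij; exact he hij
    · intro b hb
      have hba0 : b ≠ a0 := by
        intro h; subst h; exact (Finset.disjoint_left.mp hd ha0) hb
      obtain ⟨i, hi⟩ := hrange b hba0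
      exact ⟨i, by simp [hB', hi, hb], hi⟩
  refine ⟨q0, A', B', op ∘ e, ?_, ?_, ?_, ?_, ?_, ?_, ?_⟩
  · -- A' nonempty
    obtain ⟨a1, ha1, hne⟩ := Finset.exists_mem_ne (s := A) (by omega) a0
    obtain ⟨i, hi⟩ := hrange a1 hne
    exact ⟨i, by simp [hA', hi, ha1]⟩
  · -- B' nonempty
    obtain ⟨b, hb⟩ := hB
    have hba0 : b ≠ a0 := by
      intro h; subst h; exact (Finset.disjoint_left.mp hd ha0) hb
    obtain ⟨i, hi⟩ := hrange b hba0
    exact ⟨i, by simp [hB', hi, hb]⟩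
  · -- disjoint
    rw [Finset.disjoint_left]
    intro i hiA hiB
    exact Finset.disjoint_left.mp hd (by simpa [hA'] using hiA)
      (by simpa [hB'] using hiB)
  · -- union
    ext i
    have : e i ∈ A ∪ B := hu ▸ Finset.mem_univ _
    simpa [hA', hB'] using Finset.mem_union.mp this
  · -- disjoint QSets
    apply Set.eq_empty_of_subset_empty
    rw [← hint]
    exact Set.inter_subset_inter
      (qset_mono T q0 op e he A' A (by intro i hi; simpa [hA'] using hi))
      (qset_mono T q0 op e he B' B (by intro i hi; simpa [hB'] using hi))
  · -- condition (2)
    rcases h2 with h2 | h2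
    · left
      intro hq
      exact h2 (qset_mono T q0 op e he A' A (by intro i hi; simpa [hA'] using hi) hq)
    · right; rw [hBcard]; exact h2
  · -- condition (3)
    left
    rcases h3 with h3 | h3
    · intro hq
      exact h3 (qset_mono T q0 op e he B' B (by intro i hi; simpa [hB'] using hi) hq)
    · omega

/-- If a deterministic type is n-recording for n ≥ 3, it is (n-1)-recording. -/
theorem stmt1 (T : DetType) (n : ℕ) (hn : 3 ≤ n) (h : isRecording T n) :
    isRecording T (n - 1) := by
  obtain ⟨q0, A, B, op, hA, hB, hd, hu, hint, h2, h3⟩ := h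
  have hcard : A.card + B.card = n := by
    rw [← Finset.card_union_of_disjoint hd, hu, Finset.card_fin]
  have hApos : 1 ≤ A.card := Finset.card_pos.mpr hA
  have hBpos : 1 ≤ B.card := Finset.card_pos.mpr hB
  rcases le_or_gt 2 A.card with hA2 | hA2
  · exact rec_aux T n hn q0 A B op hB hd hu hint h2 h3 hA2
  · have hB2 : 2 ≤ B.card := by omega
    exact rec_aux T n hn q0 B A op hA hd.symm
      (by rw [Finset.union_comm]; exact hu)
      (by rw [Set.inter_comm]; exact hint) h3 h2 hB2
end

section
/- Let T be a deterministic type and suppose q0, nonempty teams A, B partitioning {1,...,n}, and operations op_1,...,op_n satisfy the n-recording property. Let X ∈ {A,B} with q0 ∉ Q_X. If i_1,...,i_α is a sequence of distinct process indices such that applying op_{i_1},...,op_{i_α} takes an object of type T from state q0 back to state q0, then every index of a process on team X appears in the sequence i_1,...,i_α. -/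
open DetType

theorem stmt2_aux (T : DetType) (n : ℕ) (q0 : T.State)
    (X Y : Finset (Fin n)) (op : Fin n → T.Op)
    (hU : X ∪ Y = Finset.univ)
    (h1 : T.QSet q0 op X ∩ T.QSet q0 op Y = ∅)
    (hq0 : q0 ∉ T.QSet q0 op X)
    (l : List (Fin n)) (hl : l.Nodup) (hne : l ≠ [])
    (hret : T.applySeq (l.map op) q0 = q0) :
    ∀ i ∈ X, i ∈ l := by
  intro i hi
  by_contra hil
  obtain ⟨i1, rest, rfl⟩ := List.exists_cons_of_ne_nil hne
  -- head i1 must be in Y, else q0 ∈ Q_X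
  have hi1Y : i1 ∈ Y := by
    have : i1 ∈ X ∪ Y := hU ▸ Finset.mem_univ i1
    rcases Finset.mem_union.mp this with h | h
    · exact absurd ⟨i1 :: rest, hl, ⟨i1, h, rfl⟩, hret⟩ hq0
    · exact h
  set q' := (T.tr (op i) q0).1 with hq'
  have hmemX : q' ∈ T.QSet q0 op X :=
    ⟨[i], List.nodup_singleton i, ⟨i, hi, rfl⟩, rfl⟩
  have hmemY : q' ∈ T.QSet q0 op Y := by
    refine ⟨(i1 :: rest) ++ [i], ?_, ⟨i1, hi1Y, rfl⟩, ?_⟩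
    · rw [List.nodup_append]
      exact ⟨hl, List.nodup_singleton i,
        fun a ha b hb hab => hil (by simp at hb; rw [← hb, ← hab]; exact ha)⟩
    · rw [List.map_append]
      unfold DetType.applySeq
      rw [List.foldl_append]
      have : List.foldl (fun s o => (T.tr o s).1) q0 (List.map op (i1 :: rest)) = q0 :=
        hret
      rw [this]
      rfl
  have : q' ∈ T.QSet q0 op X ∩ T.QSet q0 op Y := ⟨hmemX, hmemY⟩
  rw [h1] at this
  exact this

/-- Lemma (B-steps): under the n-recording conditions, if `q0 ∉ Q_X` for a team
`X ∈ {A,B}` and a sequence of distinct indices takes the object from `q0` back to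
`q0`, then every member of `X` appears in the sequence. -/
theorem stmt2 (T : DetType) (n : ℕ) (q0 : T.State)
    (A B : Finset (Fin n)) (op : Fin n → T.Op)
    (hA : A.Nonempty) (hB : B.Nonempty) (hAB : Disjoint A B) (hU : A ∪ B = Finset.univ)
    (h1 : T.QSet q0 op A ∩ T.QSet q0 op B = ∅)
    (h2 : q0 ∉ T.QSet q0 op A ∨ B.card = 1)
    (h3 : q0 ∉ T.QSet q0 op B ∨ A.card = 1)
    (X : Finset (Fin n)) (hX : X = A ∨ X = B) (hq0 : q0 ∉ T.QSet q0 op X)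
    (l : List (Fin n)) (hl : l.Nodup) (hne : l ≠ [])
    (hret : T.applySeq (l.map op) q0 = q0) :
    ∀ i ∈ X, i ∈ l := by
  rcases hX with rfl | rfl
  · exact stmt2_aux T n q0 X B op hU h1 hq0 l hl hne hret
  · exact stmt2_aux T n q0 X A op (by rw [Finset.union_comm]; exact hU)
      (by rw [Set.inter_comm]; exact h1) hq0 l hl hne hret
end

section
/- For n ≥ 4, if a deterministic object type T is n-discerning, then T is (n-2)-recording. More precisely, if q0, a partition of {1,...,n} into nonempty teams A and B, and operations op_1,...,op_n witness that T is n-discerning, and the indices are arranged so that {1,...,n-2} contains at least one member of each of A and B while {n-1, n} contains at least one member of each team of size greater than 1, then q0 together with the teams A' = A ∩ {1,...,n-2}, B' = B ∩ {1,...,n-2} and operations op_1,...,op_{n-2} witness that T is (n-2)-recording. -/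
open DetType

lemma mem_RSet_of_reach (T : DetType) {n : ℕ} (q0 : T.State) (op : Fin n → T.Op)
    (X : Finset (Fin n)) (j : Fin n) (L : List (Fin n)) (hnd : L.Nodup)
    (hhead : ∃ i ∈ X, L.head? = some i) (hj : j ∉ L) :
    ((T.tr (op j) (T.applySeq (L.map op) q0)).2,
     (T.tr (op j) (T.applySeq (L.map op) q0)).1) ∈ T.RSet q0 op X j := by
  refine ⟨L, [], ?_, ?_, rfl, ?_⟩
  · simp [List.nodup_append, hnd]
    intro a ha h; subst h; exact hj ha
  · obtain ⟨i, hi, hh⟩ := hhead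
    refine ⟨i, hi, ?_⟩
    cases L with
    | nil => simp at hh
    | cons a t => simpa using hh
  · simp [DetType.applySeq, List.foldl_append]

lemma mem_RSet_single (T : DetType) {n : ℕ} (q0 : T.State) (op : Fin n → T.Op)
    (X : Finset (Fin n)) (j : Fin n) (hj : j ∈ X) :
    ((T.tr (op j) q0).2, (T.tr (op j) q0).1) ∈ T.RSet q0 op X j := by
  refine ⟨[], [], by simp, ⟨j, hj, rfl⟩, by simp [DetType.applySeq], ?_⟩
  simp [DetType.applySeq]


/-- For n ≥ 4: an n-discerning witness, with the indices arranged so that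
`{1,...,n-2}` meets both teams and the last two indices meet every team of size
more than one, yields an (n-2)-recording witness by restricting the teams and
operations to the first n-2 indices. -/
theorem stmt3 (T : DetType) (n : ℕ) (hn : 4 ≤ n) (q0 : T.State)
    (A B : Finset (Fin n)) (op : Fin n → T.Op)
    (hA : A.Nonempty) (hB : B.Nonempty) (hAB : Disjoint A B) (hU : A ∪ B = Finset.univ)
    (hdisc : ∀ j, T.RSet q0 op A j ∩ T.RSet q0 op B j = ∅)
    (op' : Fin (n - 2) → T.Op)
    (hop' : ∀ i : Fin (n - 2), op' i = op (Fin.castLE (by omega) i))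
    (A' B' : Finset (Fin (n - 2)))
    (hA'def : ∀ i : Fin (n - 2), i ∈ A' ↔ Fin.castLE (by omega) i ∈ A)
    (hB'def : ∀ i : Fin (n - 2), i ∈ B' ↔ Fin.castLE (by omega) i ∈ B)
    (hA'ne : A'.Nonempty) (hB'ne : B'.Nonempty)
    (hAhigh : 1 < A.card → ∃ i ∈ A, n - 2 ≤ (i : ℕ))
    (hBhigh : 1 < B.card → ∃ i ∈ B, n - 2 ≤ (i : ℕ)) :
    T.QSet q0 op' A' ∩ T.QSet q0 op' B' = ∅ ∧
    (q0 ∉ T.QSet q0 op' A' ∨ B'.card = 1) ∧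
    (q0 ∉ T.QSet q0 op' B' ∨ A'.card = 1) := by
  have h2 : (n - 2) ≤ n := by omega
  -- lifting lemma
  have lift : ∀ (l : List (Fin (n-2))) (X' : Finset (Fin (n-2))) (X : Finset (Fin n)),
      (∀ i : Fin (n-2), i ∈ X' ↔ Fin.castLE h2 i ∈ X) →
      l.Nodup → (∃ i ∈ X', l.head? = some i) →
      ∃ L : List (Fin n), L.Nodup ∧ (∃ i ∈ X, L.head? = some i) ∧
        L.map op = l.map op' ∧ ∀ j ∈ L, (j : ℕ) < n - 2 := by
    intro l X' X hX hnd hhd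
    refine ⟨l.map (Fin.castLE h2), ?_, ?_, ?_, ?_⟩
    · exact hnd.map (Fin.castLE_injective h2)
    · obtain ⟨i, hi, hh⟩ := hhd
      exact ⟨Fin.castLE h2 i, (hX i).1 hi, by rw [List.head?_map, hh]; rfl⟩
    · rw [List.map_map]
      exact List.map_congr_left fun i _ => (hop' i).symm
    · intro j hj
      obtain ⟨i, _, rfl⟩ := List.mem_map.1 hj
      exact i.isLt
  -- main contradiction builder
  have contra : ∀ (j : Fin n) (q : T.State)
      (LA LB : List (Fin n)), LA.Nodup → LB.Nodup →
      (∃ i ∈ A, LA.head? = some i) → (∃ i ∈ B, LB.head? = some i) →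
      T.applySeq (LA.map op) q0 = q → T.applySeq (LB.map op) q0 = q →
      j ∉ LA → j ∉ LB → False := by
    intro j q LA LB hndA hndB hhdA hhdB heqA heqB hjA hjB
    have pA := mem_RSet_of_reach T q0 op A j LA hndA hhdA hjA
    have pB := mem_RSet_of_reach T q0 op B j LB hndB hhdB hjB
    rw [heqA] at pA
    rw [heqB] at pB
    have := hdisc j
    exact absurd (Set.mem_inter pA pB) (by rw [this]; exact Set.notMem_empty _)
  have key1 : T.QSet q0 op' A' ∩ T.QSet q0 op' B' = ∅ := by
    rw [Set.eq_empty_iff_forall_notMem]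
    rintro q ⟨⟨la, hland, hlahd, hlaeq⟩, ⟨lb, hlbnd, hlbhd, hlbeq⟩⟩
    obtain ⟨LA, hndA, hhdA, hmapA, hbdA⟩ := lift la A' A hA'def hland hlahd
    obtain ⟨LB, hndB, hhdB, hmapB, hbdB⟩ := lift lb B' B hB'def hlbnd hlbhd
    refine contra ⟨n-1, by omega⟩ q LA LB hndA hndB hhdA hhdB
      (by rw [hmapA]; exact hlaeq) (by rw [hmapB]; exact hlbeq) ?_ ?_
    · intro h; have := hbdA _ h; simp at this; omega
    · intro h; have := hbdB _ h; simp at this; omega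
  refine ⟨key1, ?_, ?_⟩
  · by_cases hBc : B.card = 1
    · right
      have hle : B'.card ≤ 1 := by
        have : B'.card = (B'.image (Fin.castLE h2)).card :=
          (Finset.card_image_of_injective _ (Fin.castLE_injective h2)).symm
        rw [this, ← hBc]
        apply Finset.card_le_card
        intro x hx
        obtain ⟨i, hi, rfl⟩ := Finset.mem_image.1 hx
        exact (hB'def i).1 hi
      have := hB'ne.card_pos
      omega
    · left
      have hcard : 1 < B.card := by
        have := hB.card_pos; omega
      obtain ⟨b, hbB, hbhigh⟩ := hBhigh hcard
      rintro ⟨la, hland, hlahd, hlaeq⟩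
      obtain ⟨LA, hndA, hhdA, hmapA, hbdA⟩ := lift la A' A hA'def hland hlahd
      have pA := mem_RSet_of_reach T q0 op A b LA hndA hhdA
        (fun h => by have := hbdA _ h; omega)
      rw [hmapA, hlaeq] at pA
      have pB := mem_RSet_single T q0 op B b hbB
      have := hdisc b
      exact absurd (Set.mem_inter pA pB) (by rw [this]; exact Set.notMem_empty _)
  · by_cases hAc : A.card = 1
    · right
      have hle : A'.card ≤ 1 := by
        have : A'.card = (A'.image (Fin.castLE h2)).card :=
          (Finset.card_image_of_injective _ (Fin.castLE_injective h2)).symm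
        rw [this, ← hAc]
        apply Finset.card_le_card
        intro x hx
        obtain ⟨i, hi, rfl⟩ := Finset.mem_image.1 hx
        exact (hA'def i).1 hi
      have := hA'ne.card_pos
      omega
    · left
      have hcard : 1 < A.card := by
        have := hA.card_pos; omega
      obtain ⟨a, haA, hahigh⟩ := hAhigh hcard
      rintro ⟨lb, hlbnd, hlbhd, hlbeq⟩
      obtain ⟨LB, hndB, hhdB, hmapB, hbdB⟩ := lift lb B' B hB'def hlbnd hlbhd
      have pB := mem_RSet_of_reach T q0 op B a LB hndB hhdB
        (fun h => by have := hbdB _ h; omega)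
      rw [hmapB, hlbeq] at pB
      have pA := mem_RSet_single T q0 op A a haA
      have := hdisc a
      exact absurd (Set.mem_inter pA pB) (by rw [this]; exact Set.notMem_empty _)
end

section
/- If a deterministic type is 3-discerning, then it is 2-recording. Specifically, suppose q0, teams A = {1} and B = {2,3}, and operations op_1, op_2, op_3 witness the 3-discerning property. Then q0, teams A' = {1}, B' = {2}, and operations op_1, op_2 witness the 2-recording property: since both teams have size 1, only the condition Q_{A'} ∩ Q_{B'} = ∅ needs to be verified, and it follows because any common state q, extended by applying op_3, would yield a pair in R_{A,3} ∩ R_{B,3}. -/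
open DetType

lemma aux_mem_RSet (T : DetType) (q0 : T.State) (op : Fin 3 → T.Op)
    (op' : Fin 2 → T.Op) (hop : op' = fun i => op i.castSucc)
    (X : Finset (Fin 3)) (la : List (Fin 2)) (i : Fin 2)
    (hnd : la.Nodup) (hh : la.head? = some i) (hiX : i.castSucc ∈ X) :
    ((T.tr (op 2) (T.applySeq (la.map op') q0)).2,
     (T.tr (op 2) (T.applySeq (la.map op') q0)).1) ∈ T.RSet q0 op X 2 := by
  subst hop
  refine ⟨la.map Fin.castSucc, [], ?_, ⟨i.castSucc, hiX, ?_⟩, ?_, ?_⟩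
  · rw [List.nodup_append]
    refine ⟨hnd.map (Fin.castSucc_injective 2), List.nodup_singleton _, ?_⟩
    intro x hx
    simp only [List.mem_map] at hx
    obtain ⟨y, _, rfl⟩ := hx
    simp only [List.mem_singleton]
    rintro b rfl
    exact (Fin.castSucc_lt_last y).ne
  · cases la with
    | nil => simp at hh
    | cons a l =>
      simp only [List.head?_cons, Option.some.injEq] at hh
      simp [hh]
  · simp only [List.map_map]; rfl
  · simp only [applySeq, List.map_append, List.map_cons, List.map_nil,
      List.foldl_append, List.foldl_cons, List.foldl_nil, List.map_map]
    rfl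

/-- If a deterministic type is 3-discerning with teams A = {1}, B = {2,3}, then
the restriction to the first two processes witnesses the 2-recording property:
`Q_{A'} ∩ Q_{B'} = ∅` (the other two conditions are vacuous for singleton teams). -/
theorem stmt4 (T : DetType) (q0 : T.State) (op : Fin 3 → T.Op)
    (hdisc : ∀ j, T.RSet q0 op ({0} : Finset (Fin 3)) j ∩
      T.RSet q0 op ({1, 2} : Finset (Fin 3)) j = ∅)
    (op' : Fin 2 → T.Op) (h1 : op' 0 = op 0) (h2 : op' 1 = op 1) :
    T.QSet q0 op' ({0} : Finset (Fin 2)) ∩ T.QSet q0 op' ({1} : Finset (Fin 2)) = ∅ := by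
  have hop : op' = fun i : Fin 2 => op i.castSucc := by
    funext i
    fin_cases i
    · simpa using h1
    · simpa using h2
  rw [Set.eq_empty_iff_forall_notMem]
  rintro q ⟨⟨la, hand, ⟨ia, hia, hha⟩, rfl⟩, ⟨lb, hbnd, ⟨ib, hib, hhb⟩, hqb⟩⟩
  have hia0 : ia = 0 := by simpa using hia
  have hib1 : ib = 1 := by simpa using hib
  subst hia0; subst hib1
  have hA := aux_mem_RSet T q0 op op' hop {0} la 0 hand hha (by simp)
  have hB := aux_mem_RSet T q0 op op' hop {1, 2} lb 1 hbnd hhb (by decide)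
  rw [hqb] at hB
  have := hdisc 2
  rw [Set.eq_empty_iff_forall_notMem] at this
  exact this _ ⟨hA, hB⟩
end

section
/- For all n ≥ 4, the type T_n is n-discerning: take initial state q0 = (⊥,0,0), team A of ⌊n/2⌋ processes each assigned operation op_A, and team B of ⌈n/2⌉ processes each assigned operation op_B. Then for every j, R_{A,j} consists only of pairs whose response component is 𝔸 and R_{B,j} consists only of pairs whose response component is 𝔹, hence R_{A,j} ∩ R_{B,j} = ∅. -/
open DetType

/-- States of the type `T_n`: `none` is the state (⊥,0,0); `some (w,r,c)` has
winner `w` (`true` = 𝔸, `false` = 𝔹), row `r` and column `c`. -/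
abbrev TnState := Option (Bool × ℕ × ℕ)

/-- Transitions of `T_n`.  The operation `true` is `op_A`, `false` is `op_B`.
Responses are `true` = 𝔸, `false` = 𝔹. -/
def TnTr (n : ℕ) : Bool → TnState → TnState × Bool
  | true, none => (some (true, 0, 0), true)
  | true, some (w, r, c) =>
      (if (c + 1) % (n / 2) = 0 then none else some (w, r, (c + 1) % (n / 2)), w)
  | false, none => (some (false, 0, 0), false)
  | false, some (w, r, c) =>
      (if (r + 1) % ((n + 1) / 2) = 0 then none else some (w, (r + 1) % ((n + 1) / 2), c), w)

/-- The type `T_n`. -/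
def Tn (n : ℕ) : DetType := ⟨TnState, Bool, Bool, TnTr n⟩

/-- The valid states of `T_n`: row below ⌈n/2⌉ and column below ⌊n/2⌋. -/
def TnValid (n : ℕ) : TnState → Prop
  | none => True
  | some (_, r, c) => r < (n + 1) / 2 ∧ c < n / 2

namespace Stmt5Aux

variable {n : ℕ}

/-- Predicate: index belongs to team A. -/
def pA (n : ℕ) (i : Fin n) : Bool := decide ((i : ℕ) < n / 2)

/-- Run the operations of a list of indices from the initial state. -/
def run (n : ℕ) (l : List (Fin n)) : TnState :=
  l.foldl (fun s i => (TnTr n (pA n i) s).1) none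

lemma run_append (l : List (Fin n)) (x : Fin n) :
    run n (l ++ [x]) = (TnTr n (pA n x) (run n l)).1 := by
  simp [run, List.foldl_append]

/-- Number of A-indices in the list. -/
def cntA (n : ℕ) (l : List (Fin n)) : ℕ := (l.filter (pA n)).length
/-- Number of B-indices in the list. -/
def cntB (n : ℕ) (l : List (Fin n)) : ℕ := (l.filter (fun i => !pA n i)).length

lemma card_A (hn : 4 ≤ n) :
    (Finset.univ.filter (fun i : Fin n => pA n i = true)).card = n / 2 := by
  have h : n / 2 ≤ n := Nat.div_le_self n 2
  apply Finset.card_eq_of_bijective (fun k hk => (⟨k, lt_of_lt_of_le hk h⟩ : Fin n))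
  · intro a ha
    simp only [Finset.mem_filter, Finset.mem_univ, true_and, pA, decide_eq_true_eq] at ha
    exact ⟨a, ha, Fin.ext rfl⟩
  · intro i hi; simp [pA, hi]
  · intro i j hi hj hij
    simpa [Fin.ext_iff] using hij

lemma card_B (hn : 4 ≤ n) :
    (Finset.univ.filter (fun i : Fin n => ¬ pA n i = true)).card = (n + 1) / 2 := by
  have h1 := Finset.card_filter_add_card_filter_not
    (s := (Finset.univ : Finset (Fin n))) (p := fun i => pA n i = true)
  rw [card_A hn] at h1
  simp only [Finset.card_univ, Fintype.card_fin] at h1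
  omega

lemma length_filter_le (l : List (Fin n)) (hl : l.Nodup) (p : Fin n → Bool) :
    (l.filter p).length ≤ (Finset.univ.filter (fun i => p i = true)).card := by
  classical
  rw [← List.toFinset_card_of_nodup (hl.filter p)]
  apply Finset.card_le_card
  intro i hi
  simp only [List.mem_toFinset, List.mem_filter] at hi
  simp [hi.2]

lemma cntA_le (hn : 4 ≤ n) (l : List (Fin n)) (hl : l.Nodup) : cntA n l ≤ n / 2 := by
  have := length_filter_le l hl (pA n); rwa [card_A hn] at this

lemma cntB_le (hn : 4 ≤ n) (l : List (Fin n)) (hl : l.Nodup) : cntB n l ≤ (n + 1) / 2 := by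
  have := length_filter_le l hl (fun i => !pA n i)
  simp only [Bool.not_eq_true', ← Bool.not_eq_true] at this
  rw [card_B hn] at this
  exact this

lemma cntA_append (l : List (Fin n)) (x : Fin n) :
    cntA n (l ++ [x]) = cntA n l + if pA n x then 1 else 0 := by
  simp [cntA, List.filter_append]; split <;> simp_all

lemma cntB_append (l : List (Fin n)) (x : Fin n) :
    cntB n (l ++ [x]) = cntB n l + if pA n x then 0 else 1 := by
  simp [cntB, List.filter_append]; split <;> simp_all

/-- If all of team B has already run, any further B-index is already in the list. -/
lemma allB (hn : 4 ≤ n) (l : List (Fin n)) (hl : l.Nodup) (hb : (n + 1) / 2 ≤ cntB n l)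
    (j : Fin n) (hj : pA n j = false) : j ∈ l := by
  classical
  have hnd := hl.filter (fun i => !pA n i)
  have hsub : (l.filter (fun i => !pA n i)).toFinset ⊆
      Finset.univ.filter (fun i : Fin n => ¬ pA n i = true) := by
    intro i hi
    simp only [List.mem_toFinset, List.mem_filter, Bool.not_eq_true'] at hi
    simp [hi.2]
  have hcard : (Finset.univ.filter (fun i : Fin n => ¬ pA n i = true)).card ≤
      (l.filter (fun i => !pA n i)).toFinset.card := by
    rw [List.toFinset_card_of_nodup hnd, card_B hn]; exact hb
  have heq := Finset.eq_of_subset_of_card_le hsub hcard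
  have hjmem : j ∈ (l.filter (fun i => !pA n i)).toFinset := by
    rw [heq]; simp [hj]
  simp only [List.mem_toFinset, List.mem_filter] at hjmem
  exact hjmem.1

/-- If all of team A has already run, any further A-index is already in the list. -/
lemma allA (hn : 4 ≤ n) (l : List (Fin n)) (hl : l.Nodup) (ha : n / 2 ≤ cntA n l)
    (j : Fin n) (hj : pA n j = true) : j ∈ l := by
  classical
  have hnd := hl.filter (pA n)
  have hsub : (l.filter (pA n)).toFinset ⊆
      Finset.univ.filter (fun i : Fin n => pA n i = true) := by
    intro i hi
    simp only [List.mem_toFinset, List.mem_filter] at hi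
    simp [hi.2]
  have hcard : (Finset.univ.filter (fun i : Fin n => pA n i = true)).card ≤
      (l.filter (pA n)).toFinset.card := by
    rw [List.toFinset_card_of_nodup hnd, card_A hn]; exact ha
  have heq := Finset.eq_of_subset_of_card_le hsub hcard
  have hjmem : j ∈ (l.filter (pA n)).toFinset := by
    rw [heq]; simp [hj]
  simp only [List.mem_toFinset, List.mem_filter] at hjmem
  exact hjmem.1

/-- Invariant for runs starting with a team-A index. -/
lemma invA (hn : 4 ≤ n) : ∀ l : List (Fin n), l.Nodup →
    (∃ i, l.head? = some i ∧ pA n i = true) →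
    ((run n l = none ∧ (n + 1) / 2 ≤ cntB n l) ∨
     ∃ r c, run n l = some (true, r, c) ∧ r ≤ cntB n l ∧ r < (n + 1) / 2 ∧
       c + 1 ≤ cntA n l) := by
  intro l
  induction l using List.reverseRecOn with
  | nil => intro _ h; simp at h
  | append_singleton l x ih =>
    intro hnd hhead
    have hlx : x ∉ l ∧ l.Nodup := by
      constructor
      · intro hx
        have := List.disjoint_of_nodup_append hnd
        exact this hx (by simp)
      · exact hnd.sublist (List.sublist_append_left l [x])
    rcases eq_or_ne l [] with rfl | hne
    · -- base case: single element x, which must have pA x = true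
      obtain ⟨i, hi, hpi⟩ := hhead
      simp only [List.nil_append, List.head?_cons, Option.some.injEq] at hi
      subst hi
      right
      refine ⟨0, 0, ?_, ?_, ?_, ?_⟩
      · simp [run, TnTr, hpi]
      · exact Nat.zero_le _
      · omega
      · simp [cntA, hpi]
    · have hhead' : ∃ i, l.head? = some i ∧ pA n i = true := by
        obtain ⟨i, hi, hpi⟩ := hhead
        refine ⟨i, ?_, hpi⟩
        rw [← hi]
        cases l with
        | nil => exact absurd rfl hne
        | cons a t => simp
      have hinv := ih hlx.2 hhead'
      rw [run_append, cntA_append, cntB_append]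
      rcases hinv with ⟨hq, hb⟩ | ⟨r, c, hq, hrb, hrB, hca⟩
      · -- state is none, all B used; x must be an A-index
        have hpx : pA n x = true := by
          by_contra hpx
          have := allB hn l hlx.2 hb x (Bool.not_eq_true _ ▸ by simpa using hpx)
          exact hlx.1 this
        right
        refine ⟨0, 0, ?_, Nat.zero_le _, by omega, ?_⟩
        · rw [hq]; simp [TnTr, hpx]
        · simp [cntA, hpx] <;> omega
      · cases hpx : pA n x with
        | true =>
          -- A-step: no column wrap possible
          have hA2 : cntA n (l ++ [x]) ≤ n / 2 := cntA_le hn _ hnd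
          rw [cntA_append, hpx] at hA2
          simp only [if_true] at hA2
          have hc : c + 1 < n / 2 := by omega
          have hmod : (c + 1) % (n / 2) = c + 1 := Nat.mod_eq_of_lt hc
          right
          refine ⟨r, c + 1, ?_, ?_, hrB, ?_⟩
          · rw [hq]; simp only [TnTr, hmod]
            rw [if_neg (by omega)]
          · simpa [hpx] using hrb
          · simp [hpx] <;> omega
        | false =>
          -- B-step
          rcases Nat.lt_or_ge (r + 1) ((n + 1) / 2) with hlt | hge
          · right
            refine ⟨(r + 1) % ((n + 1) / 2), c, ?_, ?_, ?_, ?_⟩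
            · rw [hq]; simp only [TnTr]
              rw [if_neg (by rw [Nat.mod_eq_of_lt hlt]; omega)]
            · rw [Nat.mod_eq_of_lt hlt]; simp [hpx] <;> omega
            · exact Nat.mod_lt _ (by omega)
            · simpa [hpx] using hca
          · -- wrap: r + 1 = (n+1)/2, so all of B has now run
            have hr1 : r + 1 = (n + 1) / 2 := by omega
            left
            constructor
            · rw [hq]; simp only [TnTr]
              rw [if_pos (by rw [hr1]; simp)]
            · simp [hpx] <;> omega

/-- Invariant for runs starting with a team-B index. -/
lemma invB (hn : 4 ≤ n) : ∀ l : List (Fin n), l.Nodup →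
    (∃ i, l.head? = some i ∧ pA n i = false) →
    ((run n l = none ∧ n / 2 ≤ cntA n l) ∨
     ∃ r c, run n l = some (false, r, c) ∧ c ≤ cntA n l ∧ c < n / 2 ∧
       r + 1 ≤ cntB n l) := by
  intro l
  induction l using List.reverseRecOn with
  | nil => intro _ h; simp at h
  | append_singleton l x ih =>
    intro hnd hhead
    have hlx : x ∉ l ∧ l.Nodup := by
      constructor
      · intro hx
        have := List.disjoint_of_nodup_append hnd
        exact this hx (by simp)
      · exact hnd.sublist (List.sublist_append_left l [x])
    rcases eq_or_ne l [] with rfl | hne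
    · obtain ⟨i, hi, hpi⟩ := hhead
      simp only [List.nil_append, List.head?_cons, Option.some.injEq] at hi
      subst hi
      right
      refine ⟨0, 0, ?_, ?_, ?_, ?_⟩
      · simp [run, TnTr, hpi]
      · exact Nat.zero_le _
      · omega
      · simp [cntB, hpi]
    · have hhead' : ∃ i, l.head? = some i ∧ pA n i = false := by
        obtain ⟨i, hi, hpi⟩ := hhead
        refine ⟨i, ?_, hpi⟩
        rw [← hi]
        cases l with
        | nil => exact absurd rfl hne
        | cons a t => simp
      have hinv := ih hlx.2 hhead'
      rw [run_append, cntA_append, cntB_append]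
      rcases hinv with ⟨hq, ha⟩ | ⟨r, c, hq, hca, hcA, hrb⟩
      · -- state is none, all A used; x must be a B-index
        have hpx : pA n x = false := by
          by_contra hpx
          have := allA hn l hlx.2 ha x (by simpa using hpx)
          exact hlx.1 this
        right
        refine ⟨0, 0, ?_, Nat.zero_le _, by omega, ?_⟩
        · rw [hq]; simp [TnTr, hpx]
        · simp [cntB, hpx] <;> omega
      · cases hpx : pA n x with
        | false =>
          -- B-step: no row wrap possible
          have hB2 : cntB n (l ++ [x]) ≤ (n + 1) / 2 := cntB_le hn _ hnd
          rw [cntB_append, hpx] at hB2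
          have hr : r + 1 < (n + 1) / 2 := by simp at hB2; omega
          have hmod : (r + 1) % ((n + 1) / 2) = r + 1 := Nat.mod_eq_of_lt hr
          right
          refine ⟨r + 1, c, ?_, ?_, hcA, ?_⟩
          · rw [hq]; simp only [TnTr, hmod]
            rw [if_neg (by omega)]
          · simpa [hpx] using hca
          · simp [hpx] <;> omega
        | true =>
          -- A-step
          rcases Nat.lt_or_ge (c + 1) (n / 2) with hlt | hge
          · right
            refine ⟨r, (c + 1) % (n / 2), ?_, ?_, ?_, ?_⟩
            · rw [hq]; simp only [TnTr]
              rw [if_neg (by rw [Nat.mod_eq_of_lt hlt]; omega)]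
            · rw [Nat.mod_eq_of_lt hlt]; simp [hpx] <;> omega
            · exact Nat.mod_lt _ (by omega)
            · simpa [hpx] using hrb
          · have hc1 : c + 1 = n / 2 := by omega
            left
            constructor
            · rw [hq]; simp only [TnTr]
              rw [if_pos (by rw [hc1]; simp)]
            · simp [hpx] <;> omega

/-- Response lemma for team-A-first runs. -/
lemma respA (hn : 4 ≤ n) (l : List (Fin n)) (j : Fin n) (hnd : l.Nodup) (hj : j ∉ l)
    (hnil : l = [] → pA n j = true)
    (hh : ∀ i, l.head? = some i → pA n i = true) :
    (TnTr n (pA n j) (run n l)).2 = true := by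
  rcases eq_or_ne l [] with rfl | hne
  · have := hnil rfl
    simp [run, TnTr, this]
  · have hhead : ∃ i, l.head? = some i ∧ pA n i = true := by
      cases l with
      | nil => exact absurd rfl hne
      | cons a t => exact ⟨a, rfl, hh a rfl⟩
    rcases invA hn l hnd hhead with ⟨hq, hb⟩ | ⟨r, c, hq, _, _, _⟩
    · have hpj : pA n j = true := by
        by_contra hpj
        exact hj (allB hn l hnd hb j (by simpa using hpj))
      rw [hq]; simp [TnTr, hpj]
    · rw [hq]; cases pA n j <;> simp [TnTr]

/-- Response lemma for team-B-first runs. -/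
lemma respB (hn : 4 ≤ n) (l : List (Fin n)) (j : Fin n) (hnd : l.Nodup) (hj : j ∉ l)
    (hnil : l = [] → pA n j = false)
    (hh : ∀ i, l.head? = some i → pA n i = false) :
    (TnTr n (pA n j) (run n l)).2 = false := by
  rcases eq_or_ne l [] with rfl | hne
  · have := hnil rfl
    simp [run, TnTr, this]
  · have hhead : ∃ i, l.head? = some i ∧ pA n i = false := by
      cases l with
      | nil => exact absurd rfl hne
      | cons a t => exact ⟨a, rfl, hh a rfl⟩
    rcases invB hn l hnd hhead with ⟨hq, ha⟩ | ⟨r, c, hq, _, _, _⟩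
    · have hpj : pA n j = false := by
        by_contra hpj
        exact hj (allA hn l hnd ha j (by simpa using hpj))
      rw [hq]; simp [TnTr, hpj]
    · rw [hq]; cases pA n j <;> simp [TnTr]

end Stmt5Aux

/-- For n ≥ 4, `T_n` is n-discerning: with `q0 = (⊥,0,0)`, team A the ⌊n/2⌋
processes assigned `op_A` and team B the ⌈n/2⌉ processes assigned `op_B`, every
pair in `R_{A,j}` has response 𝔸, every pair in `R_{B,j}` has response 𝔹, so
`R_{A,j} ∩ R_{B,j} = ∅` for every `j`. -/
theorem stmt5 (n : ℕ) (hn : 4 ≤ n) :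
    let A : Finset (Fin n) := Finset.univ.filter (fun i => (i : ℕ) < n / 2)
    let B : Finset (Fin n) := Finset.univ.filter (fun i => ¬ (i : ℕ) < n / 2)
    let op : Fin n → (Tn n).Op := fun i => decide ((i : ℕ) < n / 2)
    let q0 : (Tn n).State := none
    (∀ j, ∀ p ∈ (Tn n).RSet q0 op A j, p.1 = true) ∧
    (∀ j, ∀ p ∈ (Tn n).RSet q0 op B j, p.1 = false) ∧
    (∀ j, (Tn n).RSet q0 op A j ∩ (Tn n).RSet q0 op B j = ∅) := by
  intro A B op q0
  have hrel : ∀ l : List (Fin n), (Tn n).applySeq (l.map op) q0 = Stmt5Aux.run n l := by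
    intro l
    simp only [DetType.applySeq, List.foldl_map]
    rfl
  have hA : ∀ j, ∀ p ∈ (Tn n).RSet q0 op A j, p.1 = true := by
    intro j p hp
    obtain ⟨l1, l2, hnd, ⟨i, hiA, hhead⟩, hresp, -⟩ := hp
    have hiA' : Stmt5Aux.pA n i = true := by
      simp only [A, Finset.mem_filter] at hiA
      simp [Stmt5Aux.pA, hiA.2]
    have hj1 : j ∉ l1 := by
      intro hj
      have := (List.nodup_append'.mp hnd).2.2
      exact this hj (by simp)
    have hnd1 : l1.Nodup := (List.nodup_append.mp hnd).1
    rw [hresp, hrel]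
    show (TnTr n (Stmt5Aux.pA n j) (Stmt5Aux.run n l1)).2 = true
    apply Stmt5Aux.respA (n := n) (by omega) l1 j hnd1 hj1
    · intro h1
      subst h1
      simp only [List.nil_append, List.head?_cons, Option.some.injEq] at hhead
      rw [hhead]; exact hiA'
    · intro i' hi'
      have : (l1 ++ j :: l2).head? = some i' := by
        cases l1 with
        | nil => simp at hi'
        | cons a t => simpa using hi'
      rw [hhead] at this
      cases this
      exact hiA'
  have hB : ∀ j, ∀ p ∈ (Tn n).RSet q0 op B j, p.1 = false := by
    intro j p hp
    obtain ⟨l1, l2, hnd, ⟨i, hiB, hhead⟩, hresp, -⟩ := hp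
    have hiB' : Stmt5Aux.pA n i = false := by
      simp only [B, Finset.mem_filter] at hiB
      simp [Stmt5Aux.pA, hiB.2]
    have hj1 : j ∉ l1 := by
      intro hj
      have := (List.nodup_append'.mp hnd).2.2
      exact this hj (by simp)
    have hnd1 : l1.Nodup := (List.nodup_append.mp hnd).1
    rw [hresp, hrel]
    show (TnTr n (Stmt5Aux.pA n j) (Stmt5Aux.run n l1)).2 = false
    apply Stmt5Aux.respB (n := n) (by omega) l1 j hnd1 hj1
    · intro h1
      subst h1
      simp only [List.nil_append, List.head?_cons, Option.some.injEq] at hhead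
      rw [hhead]; exact hiB'
    · intro i' hi'
      have : (l1 ++ j :: l2).head? = some i' := by
        cases l1 with
        | nil => simp at hi'
        | cons a t => simpa using hi'
      rw [hhead] at this
      cases this
      exact hiB'
  refine ⟨hA, hB, ?_⟩
  intro j
  rw [Set.eq_empty_iff_forall_notMem]
  rintro p ⟨hpA, hpB⟩
  have h1 := hA j p hpA
  have h2 := hB j p hpB
  rw [h1] at h2
  exact Bool.noConfusion h2
end

section
/- For all n ≥ 4, the type T_n is not (n-1)-recording. That is, there do not exist a state q0, a partition of n-1 processes into nonempty teams A and B, and operations op_1,...,op_{n-1} (each being op_A or op_B) satisfying: (1) Q_A ∩ Q_B = ∅, (2) q0 ∉ Q_A or |B| = 1, (3) q0 ∉ Q_B or |A| = 1. The proof shows that q0 must be (⊥,0,0), the two teams must be assigned distinct operations, and then |A| ≤ ⌊n/2⌋ - 1 and |B| ≤ ⌈n/2⌉ - 1, contradicting |A| + |B| = n - 1. -/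
open DetType

section Stmt6Aux

open DetType

lemma Tn_applySeq_cons (n : ℕ) (b : Bool) (l : List Bool) (q : TnState) :
    (Tn n).applySeq (b :: l) q = (Tn n).applySeq l (TnTr n b q).1 := rfl

lemma Tn_applySeq_nil (n : ℕ) (q : TnState) : (Tn n).applySeq [] q = q := rfl

lemma stepTnone (n : ℕ) : (TnTr n true none).1 = some (true, 0, 0) := rfl
lemma stepFnone (n : ℕ) : (TnTr n false none).1 = some (false, 0, 0) := rfl

lemma stepT (n : ℕ) (w : Bool) (r c : ℕ) (h : c + 1 < n / 2) :
    (TnTr n true (some (w, r, c))).1 = some (w, r, c + 1) := by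
  simp [TnTr, Nat.mod_eq_of_lt h]

lemma stepT0 (n : ℕ) (w : Bool) (r c : ℕ) (h : c + 1 = n / 2) :
    (TnTr n true (some (w, r, c))).1 = none := by
  simp [TnTr, h]

lemma stepF (n : ℕ) (w : Bool) (r c : ℕ) (h : r + 1 < (n + 1) / 2) :
    (TnTr n false (some (w, r, c))).1 = some (w, r + 1, c) := by
  simp [TnTr, Nat.mod_eq_of_lt h]

lemma stepF0 (n : ℕ) (w : Bool) (r c : ℕ) (h : r + 1 = (n + 1) / 2) :
    (TnTr n false (some (w, r, c))).1 = none := by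
  simp [TnTr, h]

lemma repTrue (n : ℕ) (w : Bool) (r : ℕ) (j c : ℕ) (hc : c < n / 2) (hj : c + j = n / 2) :
    (Tn n).applySeq (List.replicate j true) (some (w, r, c)) = none := by
  induction j generalizing c with
  | zero => omega
  | succ j ih =>
    erw [List.replicate_succ, Tn_applySeq_cons]
    by_cases h1 : c + 1 = n / 2
    · have hj0 : j = 0 := by omega
      subst hj0
      erw [stepT0 n w r c h1, List.replicate_zero, Tn_applySeq_nil]
    · rw [stepT n w r c (by omega)]
      exact ih (c + 1) (by omega) (by omega)

lemma repFalse (n : ℕ) (w : Bool) (c : ℕ) (j r : ℕ) (hr : r < (n + 1) / 2)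
    (hj : r + j = (n + 1) / 2) :
    (Tn n).applySeq (List.replicate j false) (some (w, r, c)) = none := by
  induction j generalizing r with
  | zero => omega
  | succ j ih =>
    erw [List.replicate_succ, Tn_applySeq_cons]
    by_cases h1 : r + 1 = (n + 1) / 2
    · have hj0 : j = 0 := by omega
      subst hj0
      erw [stepF0 n w r c h1, List.replicate_zero, Tn_applySeq_nil]
    · rw [stepF n w r c (by omega)]
      exact ih (r + 1) (by omega) (by omega)

lemma mem_QSet_cons (n m : ℕ) (q0 : TnState) (op : Fin m → Bool) (X : Finset (Fin m))
    (x : Fin m) (hx : x ∈ X) (t : List (Fin m)) (hnd : (x :: t).Nodup) :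
    (Tn n).applySeq ((x :: t).map op) q0 ∈ (Tn n).QSet q0 op X :=
  ⟨x :: t, hnd, ⟨x, hx, rfl⟩, rfl⟩

lemma map_take_eq_replicate {m : ℕ} (op : Fin m → Bool) (S : Finset (Fin m)) (b : Bool)
    (hop : ∀ s ∈ S, op s = b) (k : ℕ) (hk : k ≤ S.card) :
    (S.toList.take k).map op = List.replicate k b := by
  rw [List.eq_replicate_iff]
  constructor
  · rw [List.length_map, List.length_take, Finset.length_toList]
    omega
  · intro b' hb'
    obtain ⟨s, hs, rfl⟩ := List.mem_map.mp hb'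
    exact hop s (Finset.mem_toList.mp (List.take_subset _ _ hs))

lemma main_lemma (n : ℕ) (hn : 4 ≤ n) (q0 : TnState) (hq0 : TnValid n q0)
    (X Y : Finset (Fin (n - 1))) (op : Fin (n - 1) → Bool)
    (hX : X.Nonempty) (hY : Y.Nonempty) (hd : Disjoint X Y) (hu : X ∪ Y = Finset.univ)
    (hopX : ∀ x ∈ X, op x = true) (hopY : ∀ y ∈ Y, op y = false)
    (h1 : (Tn n).QSet q0 op X ∩ (Tn n).QSet q0 op Y = ∅)
    (h2 : q0 ∉ (Tn n).QSet q0 op X ∨ Y.card = 1)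
    (h3 : q0 ∉ (Tn n).QSet q0 op Y ∨ X.card = 1) : False := by
  obtain ⟨x, hx⟩ := hX
  obtain ⟨y, hy⟩ := hY
  have hxy : x ≠ y := fun h => (Finset.disjoint_left.mp hd hx) (h ▸ hy)
  have hnot : ∀ q, q ∈ (Tn n).QSet q0 op X → q ∈ (Tn n).QSet q0 op Y → False := by
    intro q hqa hqb
    exact Set.eq_empty_iff_forall_notMem.mp h1 q ⟨hqa, hqb⟩
  -- Step 1: q0 = none
  have hq0none : q0 = none := by
    cases q0 with
    | none => rfl
    | some p =>
      obtain ⟨w, r, c⟩ := p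
      exfalso
      have hq0' : r < (n + 1) / 2 ∧ c < n / 2 := hq0
      obtain ⟨hr, hc⟩ := hq0'
      have mapx : ([x] : List (Fin (n-1))).map op = [true] := by
        rw [List.map_cons, List.map_nil, hopX x hx]
      have mapy : ([y] : List (Fin (n-1))).map op = [false] := by
        rw [List.map_cons, List.map_nil, hopY y hy]
      have mapxy : ([x, y] : List (Fin (n-1))).map op = [true, false] := by
        simp [hopX x hx, hopY y hy]
      have mapyx : ([y, x] : List (Fin (n-1))).map op = [false, true] := by
        simp [hopX x hx, hopY y hy]
      have mX1 := mem_QSet_cons n (n-1) (some (w, r, c)) op X x hx [] (by simp)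
      have mY1 := mem_QSet_cons n (n-1) (some (w, r, c)) op Y y hy [] (by simp)
      have mX2 := mem_QSet_cons n (n-1) (some (w, r, c)) op X x hx [y] (by simp [hxy])
      have mY2 := mem_QSet_cons n (n-1) (some (w, r, c)) op Y y hy [x] (by simp [Ne.symm hxy])
      erw [mapx] at mX1
      erw [mapy] at mY1
      erw [mapxy] at mX2
      erw [mapyx] at mY2
      by_cases hcF : c + 1 = n / 2
      · have eX : (Tn n).applySeq [true] (some (w, r, c)) = none := by
          erw [Tn_applySeq_cons, stepT0 n w r c hcF, Tn_applySeq_nil]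
        erw [eX] at mX1
        by_cases hrC : r + 1 = (n + 1) / 2
        · have eY : (Tn n).applySeq [false] (some (w, r, c)) = none := by
            erw [Tn_applySeq_cons, stepF0 n w r c hrC, Tn_applySeq_nil]
          erw [eY] at mY1
          exact hnot none mX1 mY1
        · have eY : (Tn n).applySeq [false, true] (some (w, r, c)) = none := by
            erw [Tn_applySeq_cons, stepF n w r c (by omega), Tn_applySeq_cons,
              stepT0 n w (r+1) c hcF, Tn_applySeq_nil]
          erw [eY] at mY2
          exact hnot none mX1 mY2
      · by_cases hrC : r + 1 = (n + 1) / 2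
        · have eY : (Tn n).applySeq [false] (some (w, r, c)) = none := by
            erw [Tn_applySeq_cons, stepF0 n w r c hrC, Tn_applySeq_nil]
          erw [eY] at mY1
          have eX : (Tn n).applySeq [true, false] (some (w, r, c)) = none := by
            erw [Tn_applySeq_cons, stepT n w r c (by omega), Tn_applySeq_cons,
              stepF0 n w r (c+1) hrC, Tn_applySeq_nil]
          erw [eX] at mX2
          exact hnot none mX2 mY1
        · have eX : (Tn n).applySeq [true, false] (some (w, r, c)) = some (w, r+1, c+1) := by
            erw [Tn_applySeq_cons, stepT n w r c (by omega), Tn_applySeq_cons,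
              stepF n w r (c+1) (by omega), Tn_applySeq_nil]
          have eY : (Tn n).applySeq [false, true] (some (w, r, c)) = some (w, r+1, c+1) := by
            erw [Tn_applySeq_cons, stepF n w r c (by omega), Tn_applySeq_cons,
              stepT n w (r+1) c (by omega), Tn_applySeq_nil]
          erw [eX] at mX2
          erw [eY] at mY2
          exact hnot _ mX2 mY2
  subst hq0none
  -- Step 2: card bounds
  have hXcard : X.card + 1 ≤ n / 2 := by
    by_contra h
    have hF : n / 2 ≤ X.card := by omega
    have hnd : (y :: X.toList.take (n / 2)).Nodup := by
      rw [List.nodup_cons]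
      constructor
      · intro hmem
        exact (Finset.disjoint_left.mp hd
          (Finset.mem_toList.mp (List.take_subset _ _ hmem))) hy
      · exact (List.take_sublist _ _).nodup X.nodup_toList
    have hmap : ((y :: X.toList.take (n / 2)).map op) =
        false :: List.replicate (n / 2) true := by
      rw [List.map_cons, hopY y hy, map_take_eq_replicate op X true hopX _ hF]
    have mY := mem_QSet_cons n (n-1) none op Y y hy (X.toList.take (n / 2)) hnd
    erw [hmap, Tn_applySeq_cons, stepFnone,
      repTrue n false 0 (n / 2) 0 (by omega) (by omega)] at mY
    rcases h3 with h3 | h3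
    · exact h3 mY
    · omega
  have hYcard : Y.card + 1 ≤ (n + 1) / 2 := by
    by_contra h
    have hC : (n + 1) / 2 ≤ Y.card := by omega
    have hnd : (x :: Y.toList.take ((n + 1) / 2)).Nodup := by
      rw [List.nodup_cons]
      constructor
      · intro hmem
        exact (Finset.disjoint_right.mp hd
          (Finset.mem_toList.mp (List.take_subset _ _ hmem))) hx
      · exact (List.take_sublist _ _).nodup Y.nodup_toList
    have hmap : ((x :: Y.toList.take ((n + 1) / 2)).map op) =
        true :: List.replicate ((n + 1) / 2) false := by
      rw [List.map_cons, hopX x hx, map_take_eq_replicate op Y false hopY _ hC]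
    have mX := mem_QSet_cons n (n-1) none op X x hx (Y.toList.take ((n + 1) / 2)) hnd
    erw [hmap, Tn_applySeq_cons, stepTnone,
      repFalse n true 0 ((n + 1) / 2) 0 (by omega) (by omega)] at mX
    rcases h2 with h2 | h2
    · exact h2 mX
    · omega
  have hcards : X.card + Y.card = n - 1 := by
    rw [← Finset.card_union_of_disjoint hd, hu]
    simp
  omega

end Stmt6Aux

/-- For n ≥ 4, `T_n` is not (n-1)-recording: no valid state `q0`, partition of
n-1 processes into nonempty teams, and assignment of operations satisfies the
three recording conditions. -/
theorem stmt6 (n : ℕ) (hn : 4 ≤ n) :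
    ¬ ∃ (q0 : (Tn n).State) (A B : Finset (Fin (n - 1))) (op : Fin (n - 1) → (Tn n).Op),
      TnValid n q0 ∧ A.Nonempty ∧ B.Nonempty ∧ Disjoint A B ∧ A ∪ B = Finset.univ ∧
      (Tn n).QSet q0 op A ∩ (Tn n).QSet q0 op B = ∅ ∧
      (q0 ∉ (Tn n).QSet q0 op A ∨ B.card = 1) ∧
      (q0 ∉ (Tn n).QSet q0 op B ∨ A.card = 1) := by
  rintro ⟨q0, A, B, op, hq0, hA, hB, hd, hu, h1, h2, h3⟩
  have hnot : ∀ q, q ∈ (Tn n).QSet q0 op A → q ∈ (Tn n).QSet q0 op B → False := by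
    intro q hqa hqb
    exact Set.eq_empty_iff_forall_notMem.mp h1 q ⟨hqa, hqb⟩
  have hAB : ∀ a ∈ A, ∀ b ∈ B, op a ≠ op b := by
    intro a ha b hb heq
    have ma := mem_QSet_cons n (n-1) q0 op A a ha [] (by simp)
    have mb := mem_QSet_cons n (n-1) q0 op B b hb [] (by simp)
    have : ([a] : List (Fin (n-1))).map op = ([b] : List (Fin (n-1))).map op := by
      simp [heq]
    rw [this] at ma
    exact hnot _ ma mb
  obtain ⟨a0, ha0⟩ := hA
  obtain ⟨b0, hb0⟩ := hB
  have hb0val := hAB a0 ha0 b0 hb0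
  cases hca : op a0 with
  | true =>
    have hA' : ∀ a ∈ A, op a = true := by
      intro a ha
      have h' := hAB a ha b0 hb0
      rw [hca] at hb0val
      revert h' hb0val
      cases op a <;> cases op b0 <;> simp [Tn]
    have hB' : ∀ b ∈ B, op b = false := by
      intro b hb
      have h' := hAB a0 ha0 b hb
      rw [hca] at h'
      revert h'
      cases op b <;> simp [Tn]
    exact main_lemma n hn q0 hq0 A B op ⟨a0, ha0⟩ ⟨b0, hb0⟩ hd hu hA' hB' h1 h2 h3
  | false =>
    have hA' : ∀ a ∈ A, op a = false := by
      intro a ha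
      have h' := hAB a ha b0 hb0
      rw [hca] at hb0val
      revert h' hb0val
      cases op a <;> cases op b0 <;> simp [Tn]
    have hB' : ∀ b ∈ B, op b = true := by
      intro b hb
      have h' := hAB a0 ha0 b hb
      rw [hca] at h'
      revert h'
      cases op b <;> simp [Tn]
    exact main_lemma n hn q0 hq0 B A op ⟨b0, hb0⟩ ⟨a0, ha0⟩ hd.symm
      (by rw [Finset.union_comm]; exact hu) hB' hA'
      (by rw [Set.inter_comm]; exact h1) h3 h2
end

section
/- For all n ≥ 2, the type S_n is n-recording, witnessed by q0 = (𝔹,0), team A = {1} with op_1 = op_A, team B = {2,...,n} with op_2 = ... = op_n = op_B. With this witness, Q_A = {(𝔸,row) : 0 ≤ row < n} and Q_B = {(𝔹,row) : 0 ≤ row < n}, so Q_A ∩ Q_B = ∅ and the initial-state conditions hold (since |A| = 1 handles q0 ∈ Q_B). -/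
open DetType

/-- Transitions of the type `S_n`.  States are pairs (winner, row) with `true` = 𝔸,
`false` = 𝔹.  The operation `true` is `op_A`, `false` is `op_B`; both return ack. -/
def SnTr (n : ℕ) : Bool → Bool × ℕ → (Bool × ℕ) × Unit
  | true, (w, r) => (if (w, r) = (false, 0) then (true, 0) else (false, 0), ())
  | false, (w, r) => (if (r + 1) % n = 0 then (false, 0) else (w, (r + 1) % n), ())

/-- The type `S_n`. -/
def Sn (n : ℕ) : DetType := ⟨Bool × ℕ, Bool, Unit, SnTr n⟩

section AuxStmt7

variable {n : ℕ}

lemma sn_applySeq_nil (q : Bool × ℕ) : (Sn n).applySeq [] q = q := rfl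

lemma sn_applySeq_cons (o : Bool) (l : List Bool) (q : Bool × ℕ) :
    (Sn n).applySeq (o :: l) q = (Sn n).applySeq l ((SnTr n o q).1) := rfl

lemma sn_applySeq_append (l1 l2 : List Bool) (q : Bool × ℕ) :
    (Sn n).applySeq (l1 ++ l2) q = (Sn n).applySeq l2 ((Sn n).applySeq l1 q) :=
  List.foldl_append ..

lemma sn_trB (w : Bool) (r : ℕ) (h : r + 1 < n) :
    (SnTr n false (w, r)).1 = (w, r + 1) := by
  have h1 : (r + 1) % n = r + 1 := Nat.mod_eq_of_lt h
  simp [SnTr, h1]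

lemma sn_applyB_rep (k : ℕ) (w : Bool) (r : ℕ) (h : r + k < n) :
    (Sn n).applySeq (List.replicate k false) (w, r) = (w, r + k) := by
  induction k generalizing r with
  | zero => rfl
  | succ k ih =>
    erw [List.replicate_succ, sn_applySeq_cons, sn_trB w r (by omega),
      ih (r + 1) (by omega)]
    congr 1
    omega

lemma sn_map_op (z : Fin n) (l : List (Fin n)) (h : ∀ i ∈ l, i ≠ z) :
    l.map (fun i => decide (i = z)) = List.replicate l.length false := by
  induction l with
  | nil => rfl
  | cons a t ih =>
    simp only [List.map_cons, List.length_cons, List.replicate_succ]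
    have h1 : decide (a = z) = false := by simpa using h a (by simp)
    rw [h1, ih fun i hi => h i (by simp [hi])]

lemma sn_nodup_len (l : List (Fin n)) (h : l.Nodup) : l.length ≤ n := by
  simpa using List.Nodup.length_le_card h

/-- The list `[1, 2, ..., r]` in `Fin n`. -/
def ramp (n r : ℕ) (hn : 0 < n) : List (Fin n) :=
  (List.range r).map (fun j => ⟨(j + 1) % n, Nat.mod_lt _ hn⟩)

lemma ramp_length (r : ℕ) (hn : 0 < n) : (ramp n r hn).length = r := by
  simp [ramp]

lemma ramp_mem (r : ℕ) (hn : 0 < n) (hr : r < n) (i : Fin n) (hi : i ∈ ramp n r hn) :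
    (i : ℕ) ≠ 0 := by
  simp only [ramp, List.mem_map, List.mem_range] at hi
  obtain ⟨j, hj, rfl⟩ := hi
  have : (j + 1) % n = j + 1 := Nat.mod_eq_of_lt (by omega)
  simp [this]

lemma ramp_nodup (r : ℕ) (hn : 0 < n) (hr : r < n) : (ramp n r hn).Nodup := by
  refine List.Nodup.map_on ?_ List.nodup_range
  intro x hx y hy hxy
  simp only [List.mem_range] at hx hy
  have hx1 : (x + 1) % n = x + 1 := Nat.mod_eq_of_lt (by omega)
  have hy1 : (y + 1) % n = y + 1 := Nat.mod_eq_of_lt (by omega)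
  have := congrArg Fin.val hxy
  simp only [hx1, hy1] at this
  omega

lemma ramp_map_op (r : ℕ) (hn : 0 < n) (hr : r < n) (z : Fin n) (hz : (z : ℕ) = 0) :
    (ramp n r hn).map (fun i => decide (i = z)) = List.replicate r false := by
  rw [sn_map_op z _ (fun i hi h => ramp_mem r hn hr i hi (by rw [h, hz])), ramp_length]

lemma ramp_head (r : ℕ) (hn : 0 < n) (hr : 1 ≤ r) :
    (ramp n r hn).head? = some ⟨1 % n, Nat.mod_lt _ hn⟩ := by
  obtain ⟨s, rfl⟩ : ∃ s, r = s + 1 := ⟨r - 1, by omega⟩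
  rw [ramp, List.range_succ_eq_map]
  rfl

/-- `Q_A` computed. -/
lemma sn_QA (hn2 : 2 ≤ n) (z : Fin n) (hz : (z : ℕ) = 0) :
    (Sn n).QSet (false, 0) (fun i => decide (i = z)) {z}
      = { q | ∃ r < n, q = (true, r) } := by
  have hn : 0 < n := by omega
  ext q
  constructor
  · rintro ⟨l, hnd, ⟨i, hi, hhead⟩, rfl⟩
    rw [Finset.mem_singleton] at hi
    match l, hhead, hnd with
    | a :: t, hhead, hnd =>
      have haz : a = z := by rw [hi] at hhead; simpa using hhead
      rw [haz] at hnd ⊢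
      rw [List.nodup_cons] at hnd
      have hlen : t.length + 1 ≤ n := by
        have := sn_nodup_len (z :: t) (List.nodup_cons.mpr hnd)
        simpa using this
      have hmap : (z :: t).map (fun i => decide (i = z))
          = true :: List.replicate t.length false := by
        rw [List.map_cons, sn_map_op z t (fun i hi h => hnd.1 (h ▸ hi))]
        simp
      erw [hmap, sn_applySeq_cons]
      have hstep : (SnTr n true ((false : Bool), (0 : ℕ))).1 = (true, 0) := by
        simp [SnTr]
      erw [hstep, sn_applyB_rep t.length true 0 (by omega)]
      exact ⟨t.length, by omega, by simp⟩
  · rintro ⟨r, hr, rfl⟩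
    refine ⟨z :: ramp n r hn, ?_, ⟨z, by simp, rfl⟩, ?_⟩
    · rw [List.nodup_cons]
      exact ⟨fun h => ramp_mem r hn hr z h hz, ramp_nodup r hn hr⟩
    · erw [List.map_cons, ramp_map_op r hn hr z hz]
      have : decide (z = z) = true := by simp
      rw [this, sn_applySeq_cons]
      have hstep : (SnTr n true ((false : Bool), (0 : ℕ))).1 = (true, 0) := by
        simp [SnTr]
      erw [hstep, sn_applyB_rep r true 0 (by omega)]
      exact congrArg (Prod.mk true) (Nat.zero_add r)

/-- `Q_B` computed. -/
lemma sn_QB (hn2 : 2 ≤ n) (z : Fin n) (hz : (z : ℕ) = 0) :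
    (Sn n).QSet (false, 0) (fun i => decide (i = z))
        (Finset.univ.filter (fun i => i ≠ z))
      = { q | ∃ r < n, q = (false, r) } := by
  have hn : 0 < n := by omega
  ext q
  constructor
  · rintro ⟨l, hnd, ⟨i, hi, hhead⟩, rfl⟩
    rw [Finset.mem_filter] at hi
    by_cases hzl : z ∈ l
    · obtain ⟨s, t2, rfl⟩ := List.append_of_mem hzl
      rw [List.nodup_append] at hnd
      obtain ⟨hs, ht, hdisj⟩ := hnd
      rw [List.nodup_cons] at ht
      have hzs : z ∉ s := fun h => hdisj z h z (by simp) rfl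
      have hslen : 1 ≤ s.length := by
        cases s with
        | nil => exact absurd ((by simpa using hhead.symm : i = z)) hi.2
        | cons a s' => simp
      have hlen : s.length + 1 + t2.length ≤ n := by
        have := sn_nodup_len (s ++ z :: t2)
          (List.nodup_append.mpr ⟨hs, List.nodup_cons.mpr ht, hdisj⟩)
        simpa [Nat.add_comm, Nat.add_assoc, Nat.add_left_comm] using this
      have hmap : (s ++ z :: t2).map (fun i => decide (i = z))
          = List.replicate s.length false ++ true :: List.replicate t2.length false := by
        rw [List.map_append, List.map_cons,
          sn_map_op z s (fun i hi h => hzs (h ▸ hi)),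
          sn_map_op z t2 (fun i hi h => ht.1 (h ▸ hi))]
        simp
      erw [hmap, sn_applySeq_append, sn_applyB_rep s.length false 0 (by omega),
        sn_applySeq_cons]
      have hstep : (SnTr n true ((false : Bool), (0 + s.length : ℕ))).1 = (false, 0) := by
        have h0 : (0 + s.length : ℕ) ≠ 0 := by omega
        have hne : s ≠ [] := List.length_pos_iff.mp (by omega)
        simp [SnTr, h0, hne]
      erw [hstep, sn_applyB_rep t2.length false 0 (by omega)]
      exact ⟨t2.length, by omega, by simp⟩
    · have hall : ∀ i ∈ l, i ≠ z := fun i hi h => hzl (h ▸ hi)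
      have hlen : l.length + 1 ≤ n := by
        have := sn_nodup_len (z :: l) (List.nodup_cons.mpr ⟨hzl, hnd⟩)
        simpa using this
      erw [sn_map_op z l hall, sn_applyB_rep l.length false 0 (by omega)]
      exact ⟨l.length, by omega, by simp⟩
  · rintro ⟨r, hr, rfl⟩
    have h1n : (1 : ℕ) % n = 1 := Nat.mod_eq_of_lt (by omega)
    have hone : (⟨1 % n, Nat.mod_lt _ hn⟩ : Fin n) ≠ z := by
      intro h
      have h2 : (1 % n : ℕ) = (z : ℕ) := congrArg Fin.val h
      omega
    rcases Nat.eq_zero_or_pos r with hr0 | hr1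
    · subst hr0
      refine ⟨[⟨1 % n, Nat.mod_lt _ hn⟩, z], ?_, ⟨_, Finset.mem_filter.mpr ⟨by simp, hone⟩, rfl⟩, ?_⟩
      · simp [hone]
      · have hmap : ([⟨1 % n, Nat.mod_lt _ hn⟩, z] : List (Fin n)).map
            (fun i => decide (i = z)) = [false, true] := by
          simp [hone]
        erw [hmap, sn_applySeq_cons, sn_trB false 0 (by omega), sn_applySeq_cons]
        have hstep : (SnTr n true ((false : Bool), (0 + 1 : ℕ))).1 = (false, 0) := by
          simp [SnTr]
        rw [hstep]
        rfl
    · refine ⟨ramp n r hn, ramp_nodup r hn hr, ⟨⟨1 % n, Nat.mod_lt _ hn⟩,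
        Finset.mem_filter.mpr ⟨by simp, hone⟩, ramp_head r hn hr1⟩, ?_⟩
      erw [ramp_map_op r hn hr z hz, sn_applyB_rep r false 0 (by omega)]
      exact congrArg (Prod.mk false) (Nat.zero_add r)

end AuxStmt7

/-- For n ≥ 2, `S_n` is n-recording, witnessed by `q0 = (𝔹,0)`, team A = {1} with
op_A, team B = {2,...,n} with op_B.  With this witness `Q_A = {(𝔸,r) : r < n}`,
`Q_B = {(𝔹,r) : r < n}`, hence `Q_A ∩ Q_B = ∅`, and the two initial-state
conditions hold. -/
theorem stmt7 (n : ℕ) (hn : 2 ≤ n) :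
    let z : Fin n := ⟨0, by omega⟩
    let A : Finset (Fin n) := {z}
    let B : Finset (Fin n) := Finset.univ.filter (fun i => i ≠ z)
    let op : Fin n → (Sn n).Op := fun i => decide (i = z)
    let q0 : (Sn n).State := (false, 0)
    (Sn n).QSet q0 op A = { q | ∃ r < n, q = (true, r) } ∧
    (Sn n).QSet q0 op B = { q | ∃ r < n, q = (false, r) } ∧
    (Sn n).QSet q0 op A ∩ (Sn n).QSet q0 op B = ∅ ∧
    (q0 ∉ (Sn n).QSet q0 op A ∨ B.card = 1) ∧
    (q0 ∉ (Sn n).QSet q0 op B ∨ A.card = 1) := by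
  intro z A B op q0
  have hz : (z : ℕ) = 0 := rfl
  have hQA := sn_QA hn z hz
  have hQB := sn_QB hn z hz
  refine ⟨hQA, hQB, ?_, ?_, ?_⟩
  · rw [hQA, hQB]
    ext q
    simp only [Set.mem_inter_iff, Set.mem_setOf_eq, Set.mem_empty_iff_false, iff_false]
    rintro ⟨⟨r, _, rfl⟩, ⟨r', _, h⟩⟩
    exact absurd (congrArg Prod.fst h) (by simp)
  · left
    rw [hQA]
    rintro ⟨r, _, h⟩
    exact absurd (congrArg Prod.fst h) (by simp)
  · right
    exact Finset.card_singleton z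
end

section
/- For all n ≥ 2, the type S_n is not (n+1)-discerning. In particular: (i) for any witness, operations assigned to processes on opposite teams must neither commute nor overwrite from q0, which forces q0 = (𝔹,0) and the teams to be assigned op_A and op_B respectively; (ii) if two team-A processes are both assigned op_A, the sequences (op_A, op_A, op_B) and (op_B) both take the object from (𝔹,0) to (𝔹,1) with op_B returning ack in both, so |A| = 1; (iii) then |B| = n, and the sequences consisting of all n op_B operations followed by op_A, versus op_A alone, both take the object from (𝔹,0) to (𝔸,0) with op_A returning ack in both, contradicting R_{A,j} ∩ R_{B,j} = ∅. -/
open DetType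

/-- If two admissible sequences, one starting in `A` and one starting in `B`,
both containing `j`, end in the same final state, then `R_{A,j} ∩ R_{B,j} ≠ ∅`. -/
lemma collide {n : ℕ} (q0 : (Sn n).State) (A B : Finset (Fin (n + 1)))
    (op : Fin (n + 1) → Bool)
    (hR : ∀ j, (Sn n).RSet q0 op A j ∩ (Sn n).RSet q0 op B j = ∅)
    (j : Fin (n + 1)) (p1 s1 p2 s2 : List (Fin (n + 1)))
    (h1 : (p1 ++ j :: s1).Nodup) (h2 : (p2 ++ j :: s2).Nodup)
    (hh1 : ∃ i ∈ A, (p1 ++ j :: s1).head? = some i)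
    (hh2 : ∃ i ∈ B, (p2 ++ j :: s2).head? = some i)
    (hf : (Sn n).applySeq ((p1 ++ j :: s1).map op) q0
        = (Sn n).applySeq ((p2 ++ j :: s2).map op) q0) : False := by
  have hmem1 : (((Sn n).tr (op j) ((Sn n).applySeq (p1.map op) q0)).2,
      (Sn n).applySeq ((p1 ++ j :: s1).map op) q0) ∈ (Sn n).RSet q0 op A j :=
    ⟨p1, s1, h1, hh1, rfl, rfl⟩
  have hmem2 : (((Sn n).tr (op j) ((Sn n).applySeq (p1.map op) q0)).2,
      (Sn n).applySeq ((p1 ++ j :: s1).map op) q0) ∈ (Sn n).RSet q0 op B j :=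
    ⟨p2, s2, h2, hh2, rfl, hf⟩
  have := hR j
  rw [Set.eq_empty_iff_forall_notMem] at this
  exact this _ ⟨hmem1, hmem2⟩

lemma applySeq_append {n : ℕ} (l1 l2 : List Bool) (q : (Sn n).State) :
    (Sn n).applySeq (l1 ++ l2) q = (Sn n).applySeq l2 ((Sn n).applySeq l1 q) :=
  List.foldl_append

lemma applySeq_replicate {n : ℕ} (hn : 2 ≤ n) :
    ∀ k ≤ n, (Sn n).applySeq (List.replicate k false) (false, 0) = (false, k % n) := by
  intro k
  induction k with
  | zero => intro _; simp [DetType.applySeq, Nat.zero_mod]; rfl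
  | succ k ih =>
    intro hk
    have hk' : k ≤ n := Nat.le_of_succ_le hk
    have hkm : k % n = k := Nat.mod_eq_of_lt (Nat.lt_of_succ_le hk)
    erw [List.replicate_succ', applySeq_append, ih hk']
    show (SnTr n false (false, k % n)).1 = (false, (k + 1) % n)
    rw [hkm]
    simp only [SnTr]
    split_ifs with h
    · rw [h]
    · rfl

/-- The core argument, stated for the team `X` assigned `op_A` (`true`) and the
team `Y` assigned `op_B` (`false`). -/
lemma aux {n : ℕ} (hn : 2 ≤ n) (q0 : Bool × ℕ) (hq : q0.2 < n)
    (X Y : Finset (Fin (n + 1))) (x : Fin (n + 1)) (hx : x ∈ X) (hY : Y.Nonempty)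
    (hdisj : Disjoint X Y) (huniv : X ∪ Y = Finset.univ)
    (op : Fin (n + 1) → Bool) (hopX : ∀ i ∈ X, op i = true)
    (hopY : ∀ i ∈ Y, op i = false)
    (hR : ∀ j, (Sn n).RSet q0 op X j ∩ (Sn n).RSet q0 op Y j = ∅) : False := by
  obtain ⟨y, hy⟩ := hY
  have hxy : x ≠ y := fun h => (Finset.disjoint_left.mp hdisj hx) (h ▸ hy)
  have h1n : 1 % n = 1 := Nat.mod_eq_of_lt (by omega)
  obtain ⟨w, r⟩ := q0
  simp only at hq
  by_cases h0 : (w, r) = (false, 0)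
  · -- main case q0 = (𝔹, 0)
    obtain ⟨rfl, rfl⟩ : w = false ∧ r = 0 := by simpa [Prod.ext_iff] using h0
    by_cases hX2 : ∃ x' ∈ X, x' ≠ x
    · obtain ⟨x', hx', hx'x⟩ := hX2
      have hx'y : x' ≠ y := fun h => (Finset.disjoint_left.mp hdisj hx') (h ▸ hy)
      refine collide _ X Y op hR y [x, x'] [] [] [] ?_ ?_ ⟨x, hx, rfl⟩ ⟨y, hy, rfl⟩ ?_
      · simp [hx'x.symm, hxy, hx'y]
      · simp
      · show (Sn n).applySeq [op x, op x', op y] _ = (Sn n).applySeq [op y] _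
        rw [hopX x hx, hopX x' hx', hopY y hy]
        simp [DetType.applySeq, Sn, SnTr, h1n]
    · -- X = {x}, so Y has n elements
      push_neg at hX2
      have hXx : X = {x} := by
        apply Finset.eq_singleton_iff_unique_mem.mpr
        exact ⟨hx, fun a ha => hX2 a ha⟩
      have hcard : Y.card = n := by
        have h1 : X.card + Y.card = (n + 1) := by
          rw [← Finset.card_union_of_disjoint hdisj, huniv, Finset.card_univ,
            Fintype.card_fin]
        rw [hXx, Finset.card_singleton] at h1
        omega
      have hrep : Y.toList.map op = List.replicate n false := by
        apply List.eq_replicate_iff.mpr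
        constructor
        · rw [List.length_map, Finset.length_toList, hcard]
        · intro b hb
          obtain ⟨a, ha, rfl⟩ := List.mem_map.mp hb
          exact hopY a (Finset.mem_toList.mp ha)
      have hne : Y.toList ≠ [] := by
        intro h
        have := Finset.length_toList Y
        rw [h, hcard] at this
        simp at this
        omega
      obtain ⟨y0, L, hL⟩ := List.exists_cons_of_ne_nil hne
      have hy0 : y0 ∈ Y := Finset.mem_toList.mp (by rw [hL]; exact List.mem_cons_self)
      refine collide _ Y X op (fun j => by rw [Set.inter_comm]; exact hR j) x
        Y.toList [] [] [] ?_ ?_ ?_ ⟨x, hx, rfl⟩ ?_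
      · rw [List.nodup_append]
        refine ⟨Y.nodup_toList, by simp, ?_⟩
        intro a ha
        simp only [List.mem_cons, List.not_mem_nil, or_false]
        intro b hb h
        subst hb
        subst h
        exact (Finset.disjoint_left.mp hdisj hx) (Finset.mem_toList.mp ha)
      · simp
      · exact ⟨y0, hy0, by rw [hL]; rfl⟩
      · show (Sn n).applySeq ((Y.toList ++ [x]).map op) _
          = (Sn n).applySeq ([x].map op) _
        erw [List.map_append, applySeq_append, hrep,
          applySeq_replicate hn n le_rfl, Nat.mod_self]
  · by_cases hr : r = n - 1
    · -- one step by either operation leads to (𝔹, 0)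
      have hstepA : (SnTr n true (w, r)).1 = (false, 0) := by simp [SnTr, h0]
      have hstepB : (SnTr n false (w, r)).1 = (false, 0) := by
        have : (r + 1) % n = 0 := by
          have : r + 1 = n := by omega
          rw [this, Nat.mod_self]
        simp [SnTr, this]
      by_cases hX2 : ∃ x' ∈ X, x' ≠ x
      · obtain ⟨x', hx', hx'x⟩ := hX2
        have hx'y : x' ≠ y := fun h => (Finset.disjoint_left.mp hdisj hx') (h ▸ hy)
        refine collide _ X Y op hR x [x'] [] [y] [] ?_ ?_
          ⟨x', hx', rfl⟩ ⟨y, hy, rfl⟩ ?_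
        · simp [hx'x]
        · simp [hxy.symm]
        · show (Sn n).applySeq [op x', op x] _ = (Sn n).applySeq [op y, op x] _
          rw [hopX x hx, hopX x' hx', hopY y hy]
          show (SnTr n true (SnTr n true (w, r)).1).1
            = (SnTr n true (SnTr n false (w, r)).1).1
          rw [hstepA, hstepB]
      · -- X = {x}, so Y has n ≥ 2 elements; pick y' ≠ y in Y
        push_neg at hX2
        have hXx : X = {x} := Finset.eq_singleton_iff_unique_mem.mpr
          ⟨hx, fun a ha => hX2 a ha⟩
        have hcard : 1 < Y.card := by
          have h1 : X.card + Y.card = (n + 1) := by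
            rw [← Finset.card_union_of_disjoint hdisj, huniv, Finset.card_univ,
              Fintype.card_fin]
          rw [hXx, Finset.card_singleton] at h1
          omega
        obtain ⟨y', hy', hy'y⟩ := Finset.exists_mem_ne hcard y
        have hxy' : x ≠ y' := fun h => (Finset.disjoint_left.mp hdisj hx) (h ▸ hy')
        refine collide _ X Y op hR y [x] [] [y'] [] ?_ ?_
          ⟨x, hx, rfl⟩ ⟨y', hy', rfl⟩ ?_
        · simp [hxy]
        · simp [hy'y]
        · show (Sn n).applySeq [op x, op y] _ = (Sn n).applySeq [op y', op y] _
          rw [hopX x hx, hopY y hy, hopY y' hy']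
          show (SnTr n false (SnTr n true (w, r)).1).1
            = (SnTr n false (SnTr n false (w, r)).1).1
          rw [hstepA, hstepB]
    · -- op_A overwrites op_B from q0
      have hr1 : (r + 1) % n = r + 1 := Nat.mod_eq_of_lt (by omega)
      refine collide _ X Y op hR x [] [] [y] [] ?_ ?_
        ⟨x, hx, rfl⟩ ⟨y, hy, rfl⟩ ?_
      · simp
      · simp [hxy.symm]
      · show (Sn n).applySeq [op x] _ = (Sn n).applySeq [op y, op x] _
        rw [hopX x hx, hopY y hy]
        show (SnTr n true (w, r)).1 = (SnTr n true (SnTr n false (w, r)).1).1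
        have h2 : (SnTr n false (w, r)).1 = (w, r + 1) := by simp [SnTr, hr1]
        rw [h2]
        have h3 : (w, r + 1) ≠ ((false : Bool), (0 : ℕ)) := by
          intro h
          simp [Prod.ext_iff] at h
        simp [SnTr, h0, h3]

/-- For n ≥ 2, `S_n` is not (n+1)-discerning: there is no valid state `q0`
(row below n), partition of the n+1 processes into nonempty teams A, B, and
assignment of operations with `R_{A,j} ∩ R_{B,j} = ∅` for all `j`. -/
theorem stmt8 (n : ℕ) (hn : 2 ≤ n) :
    ¬ ∃ (q0 : (Sn n).State) (A B : Finset (Fin (n + 1))) (op : Fin (n + 1) → (Sn n).Op),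
      q0.2 < n ∧ A.Nonempty ∧ B.Nonempty ∧ Disjoint A B ∧ A ∪ B = Finset.univ ∧
      ∀ j, (Sn n).RSet q0 op A j ∩ (Sn n).RSet q0 op B j = ∅ := by
  rintro ⟨q0, A, B, op, hq, ⟨a, ha⟩, ⟨b, hb⟩, hdisj, huniv, hR⟩
  have hab : a ≠ b := fun h => (Finset.disjoint_left.mp hdisj ha) (h ▸ hb)
  -- Step 1: no i ∈ A, j ∈ B can have the same operation (else they commute).
  have hne : ∀ i ∈ A, ∀ j ∈ B, op i ≠ op j := by
    intro i hi j hj hop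
    have hij : i ≠ j := fun h => (Finset.disjoint_left.mp hdisj hi) (h ▸ hj)
    refine collide _ A B op hR i [] [j] [j] [] ?_ ?_ ⟨i, hi, rfl⟩ ⟨j, hj, rfl⟩ ?_
    · simp [hij]
    · simp [hij.symm]
    · show (Sn n).applySeq [op i, op j] _ = (Sn n).applySeq [op j, op i] _
      rw [hop]
  -- Step 2: op is constant on each team, with opposite values.
  have hconstA : ∀ i ∈ A, op i = op a := by
    intro i hi
    have h1 := hne i hi b hb
    have h2 := hne a ha b hb
    cases hopa : op a <;> cases hopi : op i <;> cases hopb : op b <;>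
      simp only [hopa, hopi, hopb] at h1 h2 <;> tauto
  have hconstB : ∀ j ∈ B, op j = !(op a) := by
    intro j hj
    have h2 := hne a ha j hj
    cases hopa : op a <;> cases hopj : op j <;> simp_all <;> rfl
  cases hopa : op a with
  | true =>
    exact aux hn q0 hq A B a ha ⟨b, hb⟩ hdisj huniv op
      (fun i hi => (hconstA i hi).trans hopa)
      (fun j hj => by rw [hconstB j hj, hopa]; rfl) hR
  | false =>
    exact aux hn q0 hq B A b hb ⟨a, ha⟩ hdisj.symm
      (by rw [Finset.union_comm]; exact huniv) op
      (fun j hj => by rw [hconstB j hj, hopa]; rfl)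
      (fun i hi => (hconstA i hi).trans hopa)
      (fun j => by rw [Set.inter_comm]; exact hR j)
end
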